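/- Let A be a POVM with n outcomes on ℂ^d. Then the following are equivalent: (i) A is not informationally complete with respect to the set of pure states; (ii) there exists a nonzero selfadjoint matrix T with rank T ≤ 2 and trace(T * A j) = 0 for all j; (iii) there exists a selfadjoint matrix T with rank T = 2 and trace(T * A j) = 0 for all j. -/

import Mathlib

open Matrix
open scoped ComplexOrder

/-- A POVM with `n` outcomes on `ℂ^d`: a family of positive semidefinite matrices summing to the
identity. -/
def IsPOVM {d n : ℕ} (A : Fin n → Matrix (Fin d) (Fin d) ℂ) : Prop :=
  (∀ j, (A j).PosSemidef) ∧ ∑ j, A j = 1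

/-- A state on `ℂ^d`: a positive semidefinite matrix with trace 1. -/
def IsState {d : ℕ} (ρ : Matrix (Fin d) (Fin d) ℂ) : Prop :=
  ρ.PosSemidef ∧ ρ.trace = 1

/-- A family of matrices (e.g. a POVM or a collection of selfadjoint operators) is
informationally complete w.r.t. a set `P` of states if the expectation values
`trace (ρ * A j)` separate the points of `P`. -/
def IsIC {d n : ℕ} (A : Fin n → Matrix (Fin d) (Fin d) ℂ)
    (P : Set (Matrix (Fin d) (Fin d) ℂ)) : Prop :=
  ∀ ρ₁ ∈ P, ∀ ρ₂ ∈ P, (∀ j, (ρ₁ * A j).trace = (ρ₂ * A j).trace) → ρ₁ = ρ₂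

/-- The set of pure states on `ℂ^d`: states of rank 1. -/
def PureStates (d : ℕ) : Set (Matrix (Fin d) (Fin d) ℂ) :=
  {ρ | IsState ρ ∧ ρ.rank = 1}

section Helpers

variable {d n : ℕ}

private lemma myRankAddLe (A B : Matrix (Fin d) (Fin d) ℂ) :
    (A + B).rank ≤ A.rank + B.rank := by
  classical
  have h1 : LinearMap.range (A + B).mulVecLin ≤
      LinearMap.range A.mulVecLin ⊔ LinearMap.range B.mulVecLin := by
    rintro x ⟨y, rfl⟩
    rw [Matrix.mulVecLin_add]
    exact Submodule.mem_sup.2 ⟨_, ⟨y, rfl⟩, _, ⟨y, rfl⟩, rfl⟩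
  have h2 := Submodule.finrank_mono h1
  refine h2.trans ?_
  have h3 := Submodule.finrank_sup_add_finrank_inf_eq
    (LinearMap.range A.mulVecLin) (LinearMap.range B.mulVecLin)
  unfold Matrix.rank
  omega

private lemma myRankNeg (B : Matrix (Fin d) (Fin d) ℂ) : (-B).rank = B.rank := by
  unfold Matrix.rank
  have h : (-B).mulVecLin = - B.mulVecLin := by
    ext x i
    simp [Matrix.mulVecLin_apply, Matrix.neg_mulVec]
  rw [h, LinearMap.range_neg]

private lemma myOuterPSD (v : Fin d → ℂ) : (vecMulVec v (star v)).PosSemidef := by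
  refine Matrix.PosSemidef.of_dotProduct_mulVec_nonneg ?_ ?_
  · ext i j
    simp [vecMulVec_apply, conjTranspose_apply, mul_comm]
  · intro x
    have : dotProduct (star x) (vecMulVec v (star v) *ᵥ x)
        = star (dotProduct (star v) x) * (dotProduct (star v) x) := by
      simp [dotProduct, mulVec, vecMulVec_apply, Finset.mul_sum, Finset.sum_mul]
      rw [Finset.sum_comm]
      congr 1; ext i; congr 1; ext j; ring
    rw [this]
    exact star_mul_self_nonneg _

private lemma myOuterTrace (v : Fin d → ℂ) :
    (vecMulVec v (star v)).trace = dotProduct (star v) v := by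
  simp [Matrix.trace, Matrix.diag, vecMulVec_apply, dotProduct, mul_comm]

private lemma myOuterMulVec (v x : Fin d → ℂ) :
    vecMulVec v (star v) *ᵥ x = (dotProduct (star v) x) • v := by
  ext i
  simp only [mulVec, vecMulVec_apply, dotProduct, Pi.smul_apply, smul_eq_mul,
    Finset.sum_mul, Pi.star_apply]
  exact Finset.sum_congr rfl fun j _ => by ring

private lemma myOuterRank {v : Fin d → ℂ} (hv : v ≠ 0) :
    (vecMulVec v (star v)).rank = 1 := by
  classical
  have hle : (vecMulVec v (star v)).rank ≤ 1 := by
    rw [vecMulVec_eq (Fin 1)]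
    refine (Matrix.rank_mul_le_left _ _).trans ?_
    exact le_of_le_of_eq (Matrix.rank_le_card_width (Matrix.replicateCol (Fin 1) v)) (by simp)
  have hc : dotProduct (star v) v ≠ 0 := by
    simpa using (dotProduct_star_self_eq_zero (v := v)).ne.mpr hv
  have hmem : v ∈ LinearMap.range (vecMulVec v (star v)).mulVecLin := by
    refine ⟨(dotProduct (star v) v)⁻¹ • v, ?_⟩
    rw [Matrix.mulVecLin_apply, Matrix.mulVec_smul, myOuterMulVec, smul_smul,
      inv_mul_cancel₀ hc, one_smul]
  have hge : 1 ≤ (vecMulVec v (star v)).rank := by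
    have := Submodule.finrank_mono
      ((Submodule.span_singleton_le_iff_mem _ _).2 hmem)
    rwa [finrank_span_singleton hv] at this
  omega

private lemma myTraceExpand {T : Matrix (Fin d) (Fin d) ℂ} (hT : T.IsHermitian)
    (B : Matrix (Fin d) (Fin d) ℂ) :
    (T * B).trace = ∑ m, (hT.eigenvalues m : ℂ) *
      ((vecMulVec (fun a => (hT.eigenvectorUnitary : Matrix (Fin d) (Fin d) ℂ) a m)
        (star fun a => (hT.eigenvectorUnitary : Matrix (Fin d) (Fin d) ℂ) a m)) * B).trace := by
  conv_lhs => rw [hT.spectral_theorem, Unitary.conjStarAlgAut_apply]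
  simp only [Matrix.trace, Matrix.diag, Matrix.mul_apply, Matrix.mul_diagonal,
    Matrix.conjTranspose_apply, vecMulVec_apply, Pi.star_apply, Function.comp,
    Finset.mul_sum, Finset.sum_mul, Matrix.star_apply, Matrix.diagonal_apply, mul_ite,
    ite_mul, zero_mul, mul_zero, Finset.sum_ite_eq, Finset.sum_ite_eq', Finset.mem_univ, if_true]
  conv_lhs => enter [2, x]; rw [Finset.sum_comm]
  rw [Finset.sum_comm]
  simp only [show ((RCLike.ofReal : ℝ → ℂ)) = Complex.ofReal from rfl]
  refine Finset.sum_congr rfl fun m _ => Finset.sum_congr rfl fun x _ =>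
    Finset.sum_congr rfl fun y _ => ?_
  ring

private lemma myColumnOrtho {T : Matrix (Fin d) (Fin d) ℂ} (hT : T.IsHermitian) (m k : Fin d) :
    dotProduct (star fun a => (hT.eigenvectorUnitary : Matrix (Fin d) (Fin d) ℂ) a m)
      (fun a => (hT.eigenvectorUnitary : Matrix (Fin d) (Fin d) ℂ) a k)
      = if m = k then 1 else 0 := by
  have h : (star (hT.eigenvectorUnitary : Matrix (Fin d) (Fin d) ℂ)) *
      (hT.eigenvectorUnitary : Matrix (Fin d) (Fin d) ℂ) = 1 := by
    exact_mod_cast Unitary.coe_star_mul_self hT.eigenvectorUnitary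
  have := congrFun (congrFun h m) k
  simpa [Matrix.mul_apply, Matrix.star_apply, Matrix.one_apply, dotProduct] using this

private lemma myTraceSumEig {T : Matrix (Fin d) (Fin d) ℂ} (hT : T.IsHermitian) :
    T.trace = ∑ m, (hT.eigenvalues m : ℂ) := by
  conv_lhs => rw [hT.spectral_theorem, Unitary.conjStarAlgAut_apply]
  rw [Matrix.trace_mul_cycle]
  have h : (star (hT.eigenvectorUnitary : Matrix (Fin d) (Fin d) ℂ)) *
      (hT.eigenvectorUnitary : Matrix (Fin d) (Fin d) ℂ) = 1 := by
    exact_mod_cast Unitary.coe_star_mul_self hT.eigenvectorUnitary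
  rw [h, one_mul, Matrix.trace_diagonal]
  rfl

private lemma myTraceZero {A : Fin n → Matrix (Fin d) (Fin d) ℂ}
    (hA : IsPOVM A) {T : Matrix (Fin d) (Fin d) ℂ}
    (htr : ∀ j, (T * A j).trace = 0) : T.trace = 0 := by
  have : T.trace = (T * ∑ j, A j).trace := by rw [hA.2, mul_one]
  rw [this, Finset.mul_sum, Matrix.trace_sum]
  simp [htr]

private lemma myL1 {A : Fin n → Matrix (Fin d) (Fin d) ℂ}
    (h : ¬ IsIC A (PureStates d)) :
    ∃ T : Matrix (Fin d) (Fin d) ℂ, T.IsHermitian ∧ T ≠ 0 ∧ T.rank ≤ 2 ∧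
      ∀ j, (T * A j).trace = 0 := by
  unfold IsIC at h
  push_neg at h
  obtain ⟨ρ₁, h₁, ρ₂, h₂, hj, hne⟩ := h
  refine ⟨ρ₁ - ρ₂, (h₁.1.1.isHermitian).sub (h₂.1.1.isHermitian),
    sub_ne_zero_of_ne hne, ?_, ?_⟩
  · have := myRankAddLe ρ₁ (-ρ₂)
    rw [myRankNeg, h₁.2, h₂.2] at this
    simpa [sub_eq_add_neg] using this
  · intro j
    rw [Matrix.sub_mul, Matrix.trace_sub, hj j, sub_self]

private lemma myL2 {A : Fin n → Matrix (Fin d) (Fin d) ℂ} (hA : IsPOVM A)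
    (h : ∃ T : Matrix (Fin d) (Fin d) ℂ, T.IsHermitian ∧ T ≠ 0 ∧ T.rank ≤ 2 ∧
      ∀ j, (T * A j).trace = 0) :
    ∃ T : Matrix (Fin d) (Fin d) ℂ, T.IsHermitian ∧ T.rank = 2 ∧
      ∀ j, (T * A j).trace = 0 := by
  classical
  obtain ⟨T, hH, hne, hrank, htr⟩ := h
  refine ⟨T, hH, ?_, htr⟩
  have htr0 : T.trace = 0 := myTraceZero hA htr
  have hsum : ∑ m, hH.eigenvalues m = 0 := by
    have : ((∑ m, hH.eigenvalues m : ℝ) : ℂ) = 0 := by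
      push_cast
      rw [← myTraceSumEig hH, htr0]
    exact_mod_cast this
  have hcard := hH.rank_eq_card_non_zero_eigs
  set S : Finset (Fin d) := Finset.univ.filter (fun m => hH.eigenvalues m ≠ 0) with hS
  have hcS : T.rank = S.card := by
    rw [hcard, Fintype.card_subtype]
  have hSsum : ∑ m ∈ S, hH.eigenvalues m = 0 := by
    rw [hS, Finset.sum_filter_ne_zero, hsum]
  have h0 : S.card ≠ 0 := by
    intro h0
    apply hne
    have hall : ∀ m, hH.eigenvalues m = 0 := by
      intro m
      by_contra hm
      have : m ∈ S := by simp [hS, hm]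
      simp [Finset.card_eq_zero.mp h0] at this
    rw [hH.spectral_theorem, Unitary.conjStarAlgAut_apply]
    have : Matrix.diagonal (RCLike.ofReal ∘ hH.eigenvalues) = (0 : Matrix (Fin d) (Fin d) ℂ) := by
      ext i j
      simp [Matrix.diagonal_apply, hall]
    rw [this, Matrix.mul_zero, Matrix.zero_mul]
  have h1 : S.card ≠ 1 := by
    intro h1
    obtain ⟨a, ha⟩ := Finset.card_eq_one.mp h1
    have haS : a ∈ S := by simp [ha]
    have : hH.eigenvalues a ≠ 0 := by
      rw [hS] at haS
      exact (Finset.mem_filter.mp haS).2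
    apply this
    rw [ha, Finset.sum_singleton] at hSsum
    exact hSsum
  omega

private lemma myL3 {A : Fin n → Matrix (Fin d) (Fin d) ℂ} (hA : IsPOVM A)
    (h : ∃ T : Matrix (Fin d) (Fin d) ℂ, T.IsHermitian ∧ T.rank = 2 ∧
      ∀ j, (T * A j).trace = 0) :
    ¬ IsIC A (PureStates d) := by
  classical
  obtain ⟨T, hH, hrank, htr⟩ := h
  have htr0 : T.trace = 0 := myTraceZero hA htr
  set e := hH.eigenvalues with he
  set V := (hH.eigenvectorUnitary : Matrix (Fin d) (Fin d) ℂ) with hV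
  set v : Fin d → Fin d → ℂ := fun m a => V a m with hv
  set P : Fin d → Matrix (Fin d) (Fin d) ℂ := fun m => vecMulVec (v m) (star (v m)) with hP
  set S : Finset (Fin d) := Finset.univ.filter (fun m => e m ≠ 0) with hS
  have hcS : S.card = 2 := by
    rw [← hrank, hH.rank_eq_card_non_zero_eigs, Fintype.card_subtype]
  obtain ⟨i, k, hik, hSik⟩ := Finset.card_eq_two.mp hcS
  have hiS : i ∈ S := by rw [hSik]; simp
  have hkS : k ∈ S := by rw [hSik]; simp
  have hei : e i ≠ 0 := (Finset.mem_filter.mp hiS).2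
  have hek : e k ≠ 0 := (Finset.mem_filter.mp hkS).2
  -- reduce sums over univ to sums over {i, k}
  have hred : ∀ c : Fin d → ℂ, ∑ m, (e m : ℂ) * c m = (e i : ℂ) * c i + (e k : ℂ) * c k := by
    intro c
    rw [← Finset.sum_subset (Finset.subset_univ S) (by
      intro x _ hx
      rw [hS] at hx
      simp only [Finset.mem_filter, Finset.mem_univ, true_and, not_not] at hx
      simp [hx])]
    rw [hSik, Finset.sum_pair hik]
  have hsum : (e i : ℂ) + (e k : ℂ) = 0 := by
    have h0 : ∑ m, (e m : ℂ) * 1 = (e i : ℂ) * 1 + (e k : ℂ) * 1 := hred 1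
    simp only [mul_one] at h0
    rw [← h0, ← myTraceSumEig hH, htr0]
  -- the two pure states
  have hortho : ∀ m l : Fin d, dotProduct (star (v m)) (v l) = if m = l then 1 else 0 :=
    fun m l => myColumnOrtho hH m l
  have hunit : ∀ m, dotProduct (star (v m)) (v m) = 1 := by
    intro m; rw [hortho m m, if_pos rfl]
  have hvne : ∀ m, v m ≠ 0 := by
    intro m hm
    have := hunit m
    rw [hm] at this
    simp at this
  have hpure : ∀ m, P m ∈ PureStates d := by
    intro m
    refine ⟨⟨myOuterPSD (v m), ?_⟩, myOuterRank (hvne m)⟩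
    rw [myOuterTrace, hunit]
  have hPne : P i ≠ P k := by
    intro hPik
    have h1 : P i *ᵥ v i = v i := by
      rw [hP, myOuterMulVec, hunit, one_smul]
    have h2 : P k *ᵥ v i = 0 := by
      rw [hP, myOuterMulVec, hortho k i, if_neg (Ne.symm hik), zero_smul]
    rw [hPik, h2] at h1
    exact hvne i h1.symm
  have hEq : ∀ j, (P i * A j).trace = (P k * A j).trace := by
    intro j
    have hexp := myTraceExpand hH (A j)
    rw [htr j] at hexp
    have : (0 : ℂ) = (e i : ℂ) * (P i * A j).trace + (e k : ℂ) * (P k * A j).trace := by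
      rw [hexp]
      exact hred fun m => (P m * A j).trace
    have hei' : (e i : ℂ) ≠ 0 := by exact_mod_cast hei
    have hfin : (e i : ℂ) * ((P i * A j).trace - (P k * A j).trace) = 0 := by
      have hk' : (e k : ℂ) = -(e i : ℂ) := by linear_combination hsum
      rw [hk'] at this
      linear_combination -this
    rcases mul_eq_zero.mp hfin with h | h
    · exact absurd h hei'
    · exact sub_eq_zero.mp h
  intro hIC
  exact hPne (hIC (P i) (hpure i) (P k) (hpure k) hEq)

end Helpers

/-- Prop. 6 of the paper: a POVM `A` fails to be informationally complete w.r.t. the pure states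
iff there is a nonzero selfadjoint matrix of rank at most `2` orthogonal to all POVM elements,
iff there is a selfadjoint matrix of rank exactly `2` orthogonal to all POVM elements. -/
theorem not_pure_state_ic_iff (d n : ℕ) (A : Fin n → Matrix (Fin d) (Fin d) ℂ)
    (hA : IsPOVM A) :
    (¬ IsIC A (PureStates d) ↔
      ∃ T : Matrix (Fin d) (Fin d) ℂ, T.IsHermitian ∧ T ≠ 0 ∧ T.rank ≤ 2 ∧
        ∀ j, (T * A j).trace = 0) ∧
    (¬ IsIC A (PureStates d) ↔
      ∃ T : Matrix (Fin d) (Fin d) ℂ, T.IsHermitian ∧ T.rank = 2 ∧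
        ∀ j, (T * A j).trace = 0) := by
  constructor
  · exact ⟨myL1, fun h => myL3 hA (myL2 hA h)⟩
  · exact ⟨fun h => myL2 hA (myL1 h), myL3 hA⟩
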